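/- arXiv:2302.12112 — 7 statements merged into one kernel-verified Lean document; each statement's English description precedes it below -/
import Mathlib

section
/- Let C be a set with at least two elements and let f : Cⁿ → C be a function preserving the relation OR(=_C, =_C) := {(a,a',b,b') ∈ C⁴ : a = a' ∨ b = b'}. Then f depends on at most one coordinate, i.e., there is at most one index i such that changing only the i-th argument can change the value of f. -/
/-- A function preserving OR(=,=) on a set with at least two elements depends
on at most one coordinate. -/
theorem stmt1 {C : Type*} (htwo : ∃ a b : C, a ≠ b) (n : ℕ) (f : (Fin n → C) → C)
    (hf : ∀ p q r s : Fin n → C, (∀ i, p i = q i ∨ r i = s i) →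
      (f p = f q ∨ f r = f s)) :
    ∀ i j : Fin n,
      (∃ x y : Fin n → C, (∀ l, l ≠ i → x l = y l) ∧ f x ≠ f y) →
      (∃ x y : Fin n → C, (∀ l, l ≠ j → x l = y l) ∧ f x ≠ f y) →
      i = j := by
  intro i j ⟨x, y, hxy, hfxy⟩ ⟨u, v, huv, hfuv⟩
  by_contra hij
  have := hf x y u v (fun l => by
    by_cases hl : l = i
    · exact Or.inr (huv l (hl ▸ hij))
    · exact Or.inl (hxy l hl))
  tauto
end

section
/- Let R ⊆ Aⁿ (n ≥ 3) be a totally symmetric, totally reflexive relation satisfying R = R↑ⁿ, where R↑ⁿ(x₁,...,xₙ) := ∃y, ⋀_{1≤i₁<...<i_{n-1}≤n} R(y, x_{i₁},...,x_{i_{n-1}}). Then the binary relation α = {(a,a') : ∀a₃,...,aₙ, (a,a',a₃,...,aₙ) ∈ R} is an equivalence relation on A. -/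
private lemma removeNth_cons_succ {n : ℕ} {α : Type*} (j : Fin (n + 1)) (x : α)
    (u : Fin (n + 1) → α) :
    (Fin.removeNth j.succ (Fin.cons x u : Fin (n + 2) → α) : Fin (n + 1) → α) =
      (Fin.cons x (Fin.removeNth j u) : Fin (n + 1) → α) := by
  funext k
  cases k using Fin.cases with
  | zero => simp [Fin.removeNth, Fin.succ_succAbove_zero]
  | succ k => simp [Fin.removeNth, Fin.succ_succAbove_succ]

private lemma cons_comp_swap {n : ℕ} {α : Type*} (a b : α) (s : Fin (n + 1) → α) :
    (Fin.cons a (Fin.cons b s) : Fin (n + 3) → α) ∘ (Equiv.swap 0 1) =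
      (Fin.cons b (Fin.cons a s) : Fin (n + 3) → α) := by
  funext k
  cases k using Fin.cases with
  | zero => simp [Equiv.swap_apply_left]
  | succ k =>
    cases k using Fin.cases with
    | zero =>
      have : (Equiv.swap (0 : Fin (n + 3)) 1) 1 = 0 := Equiv.swap_apply_right 0 1
      simp [this]
    | succ k =>
      have h1 : (k.succ.succ : Fin (n + 3)) ≠ 0 := Fin.succ_ne_zero _
      have h2 : (k.succ.succ : Fin (n + 3)) ≠ 1 := by
        intro h; have := congrArg Fin.val h; simp only [Fin.val_succ, Fin.val_one] at this; omega
      simp [Equiv.swap_apply_of_ne_of_ne h1 h2]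

/-- If a totally symmetric totally reflexive relation `R` of arity `n ≥ 3`
satisfies `R = R↑ⁿ`, then the associated binary relation `α` is an equivalence
relation. -/
theorem stmt3 {A : Type*} [Fintype A] (m : ℕ) (R : (Fin (m + 3) → A) → Prop)
    (hsym : ∀ (σ : Equiv.Perm (Fin (m + 3))) (t : Fin (m + 3) → A), R t → R (t ∘ σ))
    (hrefl : ∀ t : Fin (m + 3) → A, (∃ i j, i ≠ j ∧ t i = t j) → R t)
    (hfix : ∀ t : Fin (m + 3) → A,
      R t ↔ ∃ y : A, ∀ i : Fin (m + 3), R (Fin.cons y (i.removeNth t))) :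
    Equivalence (fun a a' : A =>
      ∀ t : Fin (m + 1) → A, R (Fin.cons a (Fin.cons a' t))) := by
  have hswap : ∀ (a b : A) (s : Fin (m + 1) → A),
      R (Fin.cons a (Fin.cons b s)) → R (Fin.cons b (Fin.cons a s)) := by
    intro a b s h
    have := hsym (Equiv.swap 0 1) _ h
    rwa [cons_comp_swap] at this
  constructor
  · intro a t
    exact hrefl _ ⟨0, 1, by simp, by simp⟩
  · intro a b h t
    exact hswap a b t (h t)
  · intro a b c hab hbc t
    rw [hfix]
    refine ⟨b, fun i => ?_⟩
    cases i using Fin.cases with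
    | zero =>
      rw [Fin.removeNth_zero, Fin.tail_cons]
      exact hbc t
    | succ j =>
      rw [removeNth_cons_succ]
      cases j using Fin.cases with
      | zero =>
        rw [Fin.removeNth_zero, Fin.tail_cons]
        exact hswap a b t (hab t)
      | succ j =>
        rw [removeNth_cons_succ]
        exact hswap a b _ (hab _)
end

section
/- Let U be a finite loopless non-bipartite graph in which every proper tree-definable subset S ⊊ U induces a bipartite subgraph, and suppose U contains a triangle. Then any two vertices of U have a common neighbor. -/
/-- The family of tree-definable subsets of a graph: the smallest family
containing the whole vertex set and all singletons, and closed under taking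
neighbourhoods and binary intersections. -/
inductive TreeDef {U : Type*} (adj : U → U → Prop) : Set U → Prop
  | univ : TreeDef adj Set.univ
  | singleton (u : U) : TreeDef adj {u}
  | nbr {B : Set U} : TreeDef adj B → TreeDef adj {v | ∃ u ∈ B, adj u v}
  | inter {B₁ B₂ : Set U} : TreeDef adj B₁ → TreeDef adj B₂ → TreeDef adj (B₁ ∩ B₂)

/-- In a finite loopless non-bipartite graph containing a triangle where every
proper tree-definable subset induces a bipartite subgraph, any two vertices
have a common neighbour. -/
theorem stmt7 {U : Type*} [Fintype U] (adj : U → U → Prop)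
    (hsym : Symmetric adj) (hloop : ∀ u, ¬ adj u u)
    (hnonbip : ¬ ∃ f : U → Bool, ∀ a b, adj a b → f a ≠ f b)
    (htri : ∃ a b c : U, adj a b ∧ adj b c ∧ adj a c)
    (hbip : ∀ S : Set U, TreeDef adj S → S ≠ Set.univ →
      ∃ f : U → Bool, ∀ a ∈ S, ∀ b ∈ S, adj a b → f a ≠ f b) :
    ∀ u u' : U, ∃ w, adj u w ∧ adj u' w := by
  obtain ⟨a, b, c, hab, hbc, hac⟩ := htri
  -- A tree-definable set containing a triangle is the whole vertex set.
  have key : ∀ S : Set U, TreeDef adj S → ∀ p q r : U, p ∈ S → q ∈ S → r ∈ S →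
      adj p q → adj q r → adj p r → S = Set.univ := by
    intro S hS p q r hp hq hr hpq hqr hpr
    by_contra hne
    obtain ⟨f, hf⟩ := hbip S hS hne
    have h1 := hf p hp q hq hpq
    have h2 := hf q hq r hr hqr
    have h3 := hf p hp r hr hpr
    cases hfp : f p <;> cases hfq : f q <;> cases hfr : f r <;> simp_all
  -- N²(x) is tree-definable
  have htd : ∀ x : U,
      TreeDef adj {v | ∃ w ∈ {w | ∃ t ∈ ({x} : Set U), adj t w}, adj w v} :=
    fun x => TreeDef.nbr (TreeDef.nbr (TreeDef.singleton x))
  -- if x,y,z is a triangle then N²(x) = univ, i.e. every vertex has a common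
  -- neighbour with x
  have step : ∀ x y z : U, adj x y → adj y z → adj x z →
      ∀ v : U, ∃ w, adj x w ∧ adj w v := by
    intro x y z hxy hyz hxz v
    have hx : x ∈ {v | ∃ w ∈ {w | ∃ t ∈ ({x} : Set U), adj t w}, adj w v} :=
      ⟨y, ⟨x, rfl, hxy⟩, hsym hxy⟩
    have hy : y ∈ {v | ∃ w ∈ {w | ∃ t ∈ ({x} : Set U), adj t w}, adj w v} :=
      ⟨z, ⟨x, rfl, hxz⟩, hsym hyz⟩
    have hz : z ∈ {v | ∃ w ∈ {w | ∃ t ∈ ({x} : Set U), adj t w}, adj w v} :=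
      ⟨y, ⟨x, rfl, hxy⟩, hyz⟩
    have huniv := key _ (htd x) x y z hx hy hz hxy hyz hxz
    have hv : v ∈ {v | ∃ w ∈ {w | ∃ t ∈ ({x} : Set U), adj t w}, adj w v} := by
      rw [huniv]; trivial
    obtain ⟨w, ⟨t, ht, htw⟩, hwv⟩ := hv
    rw [Set.mem_singleton_iff] at ht
    subst ht
    exact ⟨w, htw, hwv⟩
  intro u u'
  -- u has a common neighbour with each of a, b, c
  obtain ⟨wa, hawa, hwau⟩ := step a b c hab hbc hac u
  obtain ⟨wb, hbwb, hwbu⟩ := step b c a hbc (hsym hac) (hsym hab) u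
  obtain ⟨wc, hcwc, hwcu⟩ := step c a b (hsym hac) hab (hsym hbc) u
  -- hence a, b, c ∈ N²(u), a triangle, so N²(u) = univ
  have ha : a ∈ {v | ∃ w ∈ {w | ∃ t ∈ ({u} : Set U), adj t w}, adj w v} :=
    ⟨wa, ⟨u, rfl, hsym hwau⟩, hsym hawa⟩
  have hb : b ∈ {v | ∃ w ∈ {w | ∃ t ∈ ({u} : Set U), adj t w}, adj w v} :=
    ⟨wb, ⟨u, rfl, hsym hwbu⟩, hsym hbwb⟩
  have hc : c ∈ {v | ∃ w ∈ {w | ∃ t ∈ ({u} : Set U), adj t w}, adj w v} :=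
    ⟨wc, ⟨u, rfl, hsym hwcu⟩, hsym hcwc⟩
  have huniv := key _ (htd u) a b c ha hb hc hab hbc hac
  have hu' : u' ∈ {v | ∃ w ∈ {w | ∃ t ∈ ({u} : Set U), adj t w}, adj w v} := by
    rw [huniv]; trivial
  obtain ⟨w, ⟨t, ht, htw⟩, hwu'⟩ := hu'
  rw [Set.mem_singleton_iff] at ht
  subst ht
  exact ⟨w, htw, hsym hwu'⟩
end

section
/- Let (U, —) be a finite graph, and let U₀, U₁, U₂ ⊆ U be independent sets such that U_j ⊆ U_i^— for all i ≠ j (every vertex of U_j has a neighbor in U_i), and such that the induced subgraph on U₀ ∪ U₁ is connected. Define U₀' := U₁^— ∩ U₂^—. Suppose additionally that every proper subset of U of the form obtained by intersecting neighborhoods of the Uᵢ induces a bipartite subgraph whenever it is a proper subset of U, and U₂^— ≠ U. Then U₀ ⊆ U₀', every vertex of U₀' is adjacent to a vertex of U₁, the induced subgraph on U₀' ∪ U₁ is connected, and U₀' is independent. -/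
/-- The neighbourhood of a set of vertices in a graph. -/
def nbr {U : Type*} (adj : U → U → Prop) (B : Set U) : Set U :=
  {v | ∃ u ∈ B, adj u v}

/-- The family of subsets obtained from the neighbourhoods of the three given
sets by intersections. -/
inductive NbrInter {U : Type*} (adj : U → U → Prop) (U0 U1 U2 : Set U) : Set U → Prop
  | n0 : NbrInter adj U0 U1 U2 (nbr adj U0)
  | n1 : NbrInter adj U0 U1 U2 (nbr adj U1)
  | n2 : NbrInter adj U0 U1 U2 (nbr adj U2)
  | inter {B₁ B₂ : Set U} : NbrInter adj U0 U1 U2 B₁ → NbrInter adj U0 U1 U2 B₂ →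
      NbrInter adj U0 U1 U2 (B₁ ∩ B₂)

/-- Connectivity of the subgraph induced on a set `S`. -/
def connOn {U : Type*} (adj : U → U → Prop) (S : Set U) : Prop :=
  ∀ a ∈ S, ∀ b ∈ S,
    Relation.ReflTransGen (fun x y => x ∈ S ∧ y ∈ S ∧ adj x y) a b

/-- Independence of a set of vertices. -/
def indep {U : Type*} (adj : U → U → Prop) (S : Set U) : Prop :=
  ∀ a ∈ S, ∀ b ∈ S, ¬ adj a b

/-- The blow-up lemma (case `i = 0`): blowing up `U₀` to
`U₀' = U₁^— ∩ U₂^—` preserves the strong configuration conditions. -/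
theorem stmt8 {U : Type*} [Fintype U] (adj : U → U → Prop)
    (hsym : Symmetric adj) (U0 U1 U2 : Set U)
    (hi0 : indep adj U0) (hi1 : indep adj U1) (hi2 : indep adj U2)
    (h01 : U1 ⊆ nbr adj U0) (h02 : U2 ⊆ nbr adj U0)
    (h10 : U0 ⊆ nbr adj U1) (h12 : U2 ⊆ nbr adj U1)
    (h20 : U0 ⊆ nbr adj U2) (h21 : U1 ⊆ nbr adj U2)
    (hconn : connOn adj (U0 ∪ U1))
    (hbip : ∀ S : Set U, NbrInter adj U0 U1 U2 S → S ≠ Set.univ →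
      ∃ f : U → Bool, ∀ a ∈ S, ∀ b ∈ S, adj a b → f a ≠ f b)
    (hU2 : nbr adj U2 ≠ Set.univ) :
    U0 ⊆ nbr adj U1 ∩ nbr adj U2 ∧
      (∀ v ∈ nbr adj U1 ∩ nbr adj U2, ∃ u ∈ U1, adj v u) ∧
      connOn adj ((nbr adj U1 ∩ nbr adj U2) ∪ U1) ∧
      indep adj (nbr adj U1 ∩ nbr adj U2) := by
  classical
  have hsub : U0 ⊆ nbr adj U1 ∩ nbr adj U2 := fun v hv => ⟨h10 hv, h20 hv⟩
  have hU01 : U0 ∪ U1 ⊆ nbr adj U2 := Set.union_subset h20 h21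
  refine ⟨hsub, ?_, ?_, ?_⟩
  · rintro v ⟨⟨u, hu, hadj⟩, -⟩
    exact ⟨u, hu, hsym hadj⟩
  · -- connectivity
    set S : Set U := (nbr adj U1 ∩ nbr adj U2) ∪ U1 with hS
    have hmono : U0 ∪ U1 ⊆ S := Set.union_subset_union_left _ hsub
    have hsymr : Symmetric (fun x y => x ∈ S ∧ y ∈ S ∧ adj x y) := by
      rintro x y ⟨hx, hy, hxy⟩; exact ⟨hy, hx, hsym hxy⟩
    have lift : ∀ x y, Relation.ReflTransGen
        (fun x y => x ∈ U0 ∪ U1 ∧ y ∈ U0 ∪ U1 ∧ adj x y) x y →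
        Relation.ReflTransGen (fun x y => x ∈ S ∧ y ∈ S ∧ adj x y) x y := by
      intro x y h
      exact Relation.ReflTransGen.mono (p := fun x y => x ∈ S ∧ y ∈ S ∧ adj x y) (fun x y (hh : x ∈ U0 ∪ U1 ∧ y ∈ U0 ∪ U1 ∧ adj x y) => ⟨hmono hh.1, hmono hh.2.1, hh.2.2⟩) x y h
    have step : ∀ c ∈ S, ∃ u ∈ U1,
        Relation.ReflTransGen (fun x y => x ∈ S ∧ y ∈ S ∧ adj x y) c u := by
      rintro c (hc | hc)
      · obtain ⟨⟨u, hu, hadj⟩, -⟩ := id hc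
        exact ⟨u, hu, Relation.ReflTransGen.single
          ⟨Or.inl hc, Or.inr hu, hsym hadj⟩⟩
      · exact ⟨c, hc, Relation.ReflTransGen.refl⟩
    intro a ha b hb
    obtain ⟨u, hu, hau⟩ := step a ha
    obtain ⟨u', hu', hbu'⟩ := step b hb
    have huu' := lift _ _ (hconn u (Or.inr hu) u' (Or.inr hu'))
    exact hau.trans (huu'.trans (by haveI : Std.Symm (fun x y => x ∈ S ∧ y ∈ S ∧ adj x y) := ⟨hsymr⟩; exact Std.Symm.symm _ _ hbu'))
  · -- independence
    rintro a ⟨⟨u1, hu1, hau1⟩, ha2⟩ b ⟨⟨u1', hu1', hbu1⟩, hb2⟩ hab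
    obtain ⟨f, hf⟩ := hbip (nbr adj U2) NbrInter.n2 hU2
    have hd : ∀ v ∈ U0, v ∉ U1 := fun v hv hv1 => by
      obtain ⟨u, hu, h⟩ := h10 hv
      exact hi1 u hu v hv1 h
    have key : ∀ x y : U, Relation.ReflTransGen
        (fun x y => x ∈ U0 ∪ U1 ∧ y ∈ U0 ∪ U1 ∧ adj x y) x y →
        (f x = f y ↔ (x ∈ U1 ↔ y ∈ U1)) := by
      intro x y h
      induction h with
      | refl => simp
      | @tail p q _ hyz ih =>
        obtain ⟨hy, hz, hadj⟩ := hyz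
        have hfyz : f p ≠ f q := hf _ (hU01 hy) _ (hU01 hz) hadj
        have hside : (p ∈ U1) ↔ ¬ (q ∈ U1) := by
          rcases hy with hy | hy
          · rcases hz with hz | hz
            · exact absurd hadj (hi0 _ hy _ hz)
            · exact ⟨fun h => absurd h (hd _ hy), fun hn => absurd hz hn⟩
          · rcases hz with hz | hz
            · exact ⟨fun _ => hd _ hz, fun _ => hy⟩
            · exact absurd hadj (hi1 _ hy _ hz)
        have h1 : (f x = f q) ↔ ¬ (f x = f p) := by
          rw [Bool.eq_not_of_ne hfyz]
          cases f x <;> cases f q <;> simp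
        rw [h1, ih]
        tauto
    have hwalk := hconn u1 (Or.inr hu1) u1' (Or.inr hu1')
    have hfe : f u1 = f u1' := (key _ _ hwalk).2 (iff_of_true hu1 hu1')
    have h1 : f u1 ≠ f a := hf _ (h21 hu1) _ ha2 hau1
    have h2 : f u1' ≠ f b := hf _ (h21 hu1') _ hb2 hbu1
    have h3 : f a ≠ f b := hf _ ha2 _ hb2 hab
    cases hfa : f a <;> cases hfb : f b <;> cases hfu : f u1 <;> simp_all
end

section
/- Let (A, →) be a smooth digraph all of whose weak components are finite, let G ≤ Aut(A, →), and suppose the quotient digraph A/G has a closed walk of algebraic length 1. Then there exist a, b ∈ A in the same G-orbit and a walk from a to b in (A, →) of algebraic length 1. -/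
/-- One step of a walk carrying the running algebraic length. -/
def algStep {A : Type*} (r : A → A → Prop) : A × ℤ → A × ℤ → Prop :=
  fun p q => (r p.1 q.1 ∧ q.2 = p.2 + 1) ∨ (r q.1 p.1 ∧ q.2 = p.2 - 1)

/-- Membership in the same orbit of a permutation group. -/
def sameOrbit {A : Type*} (G : Subgroup (Equiv.Perm A)) (a b : A) : Prop :=
  ∃ g ∈ G, g a = b

/-- The edge relation of the quotient digraph by the orbit equivalence,
expressed on representatives. -/
def qArr {A : Type*} (arr : A → A → Prop) (G : Subgroup (Equiv.Perm A))
    (a b : A) : Prop :=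
  ∃ a' b', sameOrbit G a a' ∧ sameOrbit G b b' ∧ arr a' b'

lemma sameOrbit_refl {A : Type*} (G : Subgroup (Equiv.Perm A)) (a : A) :
    sameOrbit G a a := ⟨1, G.one_mem, rfl⟩

lemma sameOrbit_symm {A : Type*} {G : Subgroup (Equiv.Perm A)} {a b : A}
    (h : sameOrbit G a b) : sameOrbit G b a := by
  obtain ⟨g, hg, hgab⟩ := h
  exact ⟨g⁻¹, G.inv_mem hg, by simp [← hgab]⟩

lemma sameOrbit_trans {A : Type*} {G : Subgroup (Equiv.Perm A)} {a b c : A}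
    (h1 : sameOrbit G a b) (h2 : sameOrbit G b c) : sameOrbit G a c := by
  obtain ⟨g, hg, rfl⟩ := h1
  obtain ⟨h, hh, rfl⟩ := h2
  exact ⟨h * g, G.mul_mem hh hg, rfl⟩

lemma lift_walk {A : Type*} {arr : A → A → Prop} {G : Subgroup (Equiv.Perm A)}
    (hG : ∀ g ∈ G, ∀ x y, arr x y ↔ arr (g x) (g y))
    {p q : A × ℤ}
    (h : Relation.ReflTransGen (algStep (qArr arr G)) p q) :
    ∀ x : A, sameOrbit G p.1 x →
      ∃ y : A, sameOrbit G q.1 y ∧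
        Relation.ReflTransGen (algStep arr) (x, p.2) (y, q.2) := by
  induction h with
  | refl => exact fun x hx => ⟨x, hx, Relation.ReflTransGen.refl⟩
  | @tail m q hm hstep ih =>
    intro x hx
    obtain ⟨y, hy, hwalk⟩ := ih x hx
    rcases hstep with ⟨⟨a', b', ha', hb', harr⟩, hn⟩ | ⟨⟨a', b', ha', hb', harr⟩, hn⟩
    · -- forward step: qArr m.1 q.1
      obtain ⟨g, hg, hga⟩ := sameOrbit_trans (sameOrbit_symm ha') hy
      refine ⟨g b', sameOrbit_trans hb' ⟨g, hg, rfl⟩, hwalk.tail ?_⟩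
      exact Or.inl ⟨by rw [← hga]; exact (hG g hg a' b').mp harr, hn⟩
    · -- backward step: qArr q.1 m.1
      obtain ⟨g, hg, hgb⟩ := sameOrbit_trans (sameOrbit_symm hb') hy
      refine ⟨g a', sameOrbit_trans ha' ⟨g, hg, rfl⟩, hwalk.tail ?_⟩
      exact Or.inr ⟨by rw [← hgb]; exact (hG g hg a' b').mp harr, hn⟩

/-- In a smooth digraph with finite weak components, if the quotient by a group
of automorphisms has a closed walk of algebraic length 1, then there are two
vertices in the same orbit joined by a walk of algebraic length 1. -/
theorem stmt10 {A : Type*} (arr : A → A → Prop)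
    (hsm1 : ∀ a, ∃ b, arr a b) (hsm2 : ∀ a, ∃ b, arr b a)
    (G : Subgroup (Equiv.Perm A))
    (hG : ∀ g ∈ G, ∀ x y, arr x y ↔ arr (g x) (g y))
    (hfin : ∀ a : A,
      {b | Relation.ReflTransGen (fun u v => arr u v ∨ arr v u) a b}.Finite)
    (hq : ∃ a b : A, sameOrbit G a b ∧
      Relation.ReflTransGen (algStep (qArr arr G)) (a, (0 : ℤ)) (b, 1)) :
    ∃ a b : A, sameOrbit G a b ∧
      Relation.ReflTransGen (algStep arr) (a, (0 : ℤ)) (b, 1) := by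
  obtain ⟨a, b, hab, hwalk⟩ := hq
  obtain ⟨y, hy, hw⟩ := lift_walk hG hwalk a (sameOrbit_refl G a)
  exact ⟨a, y, sameOrbit_trans hab hy, hw⟩
end

section
/- Let A be a finite set, B' ⊆ A, and (A,→) a digraph. Define B := {x ∈ B' : there exist x₁,...,x_{|B'|}, x'₁,...,x'_{|B'|} ∈ B' with x₁ → x₂ → ... → x_{|B'|} → x → x'₁ → ... → x'_{|B'|}}. Then B is the largest subset of B' on which the induced digraph is smooth (every vertex has an in- and out-neighbor within B). -/
/-- `k`-fold relational composition (with `relPow r 0 = Eq`). -/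
def relPow {A : Type*} (r : A → A → Prop) : ℕ → A → A → Prop
  | 0 => Eq
  | n + 1 => fun x z => ∃ y, r x y ∧ relPow r n y z

theorem relPow_append {A : Type*} {r : A → A → Prop} :
    ∀ {a b : ℕ} {x y z : A}, relPow r a x y → relPow r b y z → relPow r (a + b) x z := by
  intro a
  induction a with
  | zero => intro b x y z h h'; cases h; simpa using h'
  | succ m ih =>
    intro b x y z h h'
    obtain ⟨w, hw, hrest⟩ := h
    have : relPow r (m + b + 1) x z := ⟨w, hw, ih hrest h'⟩
    have he : m + 1 + b = m + b + 1 := by omega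
    rw [he]; exact this

theorem relPow_split {A : Type*} {r : A → A → Prop} :
    ∀ {a b : ℕ} {x z : A}, relPow r (a + b) x z → ∃ y, relPow r a x y ∧ relPow r b y z := by
  intro a
  induction a with
  | zero => intro b x z h; exact ⟨x, rfl, by simpa using h⟩
  | succ m ih =>
    intro b x z h
    have he : m + 1 + b = m + b + 1 := by omega
    rw [he] at h
    obtain ⟨w, hw, hrest⟩ := h
    obtain ⟨y, h1, h2⟩ := ih hrest
    exact ⟨y, ⟨w, hw, h1⟩, h2⟩

theorem relPow_one {A : Type*} {r : A → A → Prop} {x y : A} :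
    relPow r 1 x y ↔ r x y := by
  constructor
  · rintro ⟨t, ht, rfl⟩; exact ht
  · intro h; exact ⟨y, h, rfl⟩

theorem relPow_to_fun {A : Type*} {r : A → A → Prop} :
    ∀ {k : ℕ} {x z : A}, relPow r k x z →
      ∃ f : ℕ → A, f 0 = x ∧ f k = z ∧ ∀ i < k, r (f i) (f (i + 1)) := by
  intro k
  induction k with
  | zero => intro x z h; cases h; exact ⟨fun _ => x, rfl, rfl, by omega⟩
  | succ m ih =>
    intro x z h
    obtain ⟨y, hy, hrest⟩ := h
    obtain ⟨f, hf0, hfm, hstep⟩ := ih hrest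
    refine ⟨fun i => if i = 0 then x else f (i - 1), by simp, by simp [hfm], ?_⟩
    intro i hi
    rcases Nat.eq_zero_or_pos i with rfl | hpos
    · simpa [hf0] using hy
    · have h1 : ¬ (i = 0) := by omega
      have h2 : ¬ (i + 1 = 0) := by omega
      have h3 : i + 1 - 1 = i - 1 + 1 := by omega
      simp only [h1, h2, if_false, h3]
      exact hstep (i - 1) (by omega)

theorem relPow_of_fun {A : Type*} {r : A → A → Prop} :
    ∀ {k : ℕ} (f : ℕ → A), (∀ i < k, r (f i) (f (i + 1))) → relPow r k (f 0) (f k) := by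
  intro k
  induction k with
  | zero => intro f _; rfl
  | succ m ih =>
    intro f hstep
    refine ⟨f 1, hstep 0 (by omega), ?_⟩
    have := ih (fun i => f (i + 1)) (fun i hi => hstep (i + 1) (by omega))
    simpa using this

/-- Pumping: a walk of length `n = |B'|` within `B'` contains a cycle, so the
same endpoints are joined by a strictly longer walk. -/
theorem relPow_pump {A : Type*} [Fintype A] (arr : A → A → Prop) (B' : Set A) {x z : A}
    (hn : 1 ≤ B'.ncard)
    (h : relPow (fun x y => x ∈ B' ∧ y ∈ B' ∧ arr x y) B'.ncard x z) :
    ∃ c, 1 ≤ c ∧ relPow (fun x y => x ∈ B' ∧ y ∈ B' ∧ arr x y) (B'.ncard + c) x z := by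
  set rB := fun x y => x ∈ B' ∧ y ∈ B' ∧ arr x y with hrB
  set n := B'.ncard with hndef
  obtain ⟨f, hf0, hfn, hstep⟩ := relPow_to_fun h
  have hfB : ∀ i ≤ n, f i ∈ B' := by
    intro i hi
    rcases lt_or_eq_of_le hi with hlt | heq
    · exact (hstep i hlt).1
    · have := hstep (i - 1) (by omega)
      have he : i - 1 + 1 = i := by omega
      rw [he] at this
      exact this.2.1
  have hfin : B'.Finite := Set.toFinite _
  have hcard : hfin.toFinset.card = n := by
    rw [hndef, Set.ncard_eq_toFinset_card B' hfin]
  obtain ⟨i, hi, j, hj, hij, hfij⟩ :=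
    Finset.exists_ne_map_eq_of_card_lt_of_maps_to
      (s := Finset.range (n + 1)) (t := hfin.toFinset)
      (by rw [hcard, Finset.card_range]; omega)
      (fun a ha => by
        simp only [Finset.mem_coe, Finset.mem_range] at ha
        exact (Set.Finite.mem_toFinset hfin).2 (hfB a (by omega)))
  simp only [Finset.mem_range] at hi hj
  -- WLOG i < j
  obtain ⟨i, j, hilt, hjle, hfeq⟩ : ∃ i j, i < j ∧ j ≤ n ∧ f i = f j := by
    rcases lt_or_gt_of_ne hij with h' | h'
    · exact ⟨i, j, h', by omega, hfij⟩
    · exact ⟨j, i, h', by omega, hfij.symm⟩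
  set c := j - i with hc
  refine ⟨c, by omega, ?_⟩
  set g : ℕ → A := fun m => if m ≤ j then f m else f (m - c) with hg
  have hstep' : ∀ m < n + c, rB (g m) (g (m + 1)) := by
    intro m hm
    rcases lt_trichotomy m j with hmj | rfl | hmj
    · have h1 : m ≤ j := by omega
      have h2 : m + 1 ≤ j := by omega
      simp only [hg, h1, h2, if_true]
      exact hstep m (by omega)
    · have h1 : m ≤ m := le_refl _
      have h2 : ¬ (m + 1 ≤ m) := by omega
      simp only [hg, h1, h2, if_true, if_false]
      have he : m + 1 - c = i + 1 := by omega
      rw [he, ← hfeq]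
      exact hstep i (by omega)
    · have h1 : ¬ (m ≤ j) := by omega
      have h2 : ¬ (m + 1 ≤ j) := by omega
      simp only [hg, h1, h2, if_false]
      have he : m + 1 - c = m - c + 1 := by omega
      rw [he]
      exact hstep (m - c) (by omega)
  have := relPow_of_fun g hstep'
  have hg0 : g 0 = x := by simp [hg, hf0]
  have hgend : g (n + c) = z := by
    have h1 : ¬ (n + c ≤ j) := by omega
    simp only [hg, h1, if_false]
    have : n + c - c = n := by omega
    rw [this, hfn]
  rw [hg0, hgend] at this
  exact this

/-- The set of elements of `B'` admitting incoming and outgoing walks of length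
`|B'|` within `B'` is the largest subset of `B'` inducing a smooth digraph. -/
theorem stmt13 {A : Type*} [Fintype A] (arr : A → A → Prop) (B' : Set A) :
    let n := B'.ncard
    let rB := fun x y => x ∈ B' ∧ y ∈ B' ∧ arr x y
    let B := {x | x ∈ B' ∧ (∃ z, relPow rB n z x) ∧ (∃ z, relPow rB n x z)}
    (∀ x ∈ B, (∃ y ∈ B, arr x y) ∧ (∃ y ∈ B, arr y x)) ∧
      (∀ C ⊆ B', (∀ x ∈ C, (∃ y ∈ C, arr x y) ∧ (∃ y ∈ C, arr y x)) → C ⊆ B) := by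
  intro n rB B
  constructor
  · intro x hx
    obtain ⟨hxB', ⟨u, hu⟩, ⟨w, hw⟩⟩ := hx
    have hn : 1 ≤ n := by
      have : 0 < B'.ncard := (Set.ncard_pos (Set.toFinite _)).2 ⟨x, hxB'⟩
      exact this
    constructor
    · -- out-neighbor
      obtain ⟨c, hc, hw'⟩ := relPow_pump arr B' hn hw
      have hw'' : relPow rB (1 + (n + (c - 1))) x w := by
        have he : 1 + (n + (c - 1)) = n + c := by omega
        rw [he]; exact hw'
      obtain ⟨y, h1, h2⟩ := relPow_split hw''
      have hxy : rB x y := relPow_one.1 h1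
      obtain ⟨v, hv, -⟩ := relPow_split h2
      -- y incoming of length n
      have huy : relPow rB (1 + n) u y := by
        have : relPow rB (n + 1) u y := relPow_append hu (relPow_one.2 hxy)
        have he : 1 + n = n + 1 := by omega
        rw [he]; exact this
      obtain ⟨v', -, hv'⟩ := relPow_split huy
      exact ⟨y, ⟨hxy.2.1, ⟨v', hv'⟩, ⟨v, hv⟩⟩, hxy.2.2⟩
    · -- in-neighbor
      obtain ⟨c, hc, hu'⟩ := relPow_pump arr B' hn hu
      have hu'' : relPow rB ((c - 1 + n) + 1) u x := by
        have he : (c - 1 + n) + 1 = n + c := by omega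
        rw [he]; exact hu'
      obtain ⟨y, h1, h2⟩ := relPow_split hu''
      have hyx : rB y x := relPow_one.1 h2
      obtain ⟨v, -, hv⟩ := relPow_split h1
      -- y outgoing of length n
      have hyw : relPow rB (n + 1) y w := by
        have : relPow rB (1 + n) y w := relPow_append (relPow_one.2 hyx) hw
        have he : n + 1 = 1 + n := by omega
        rw [he]; exact this
      obtain ⟨v', hv', -⟩ := relPow_split hyw
      exact ⟨y, ⟨hyx.1, ⟨v, hv⟩, ⟨v', hv'⟩⟩, hyx.2.2⟩
  · intro C hCsub hsm x hxC
    have key : ∀ k, (∃ z ∈ C, relPow rB k z x) ∧ (∃ z ∈ C, relPow rB k x z) := by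
      intro k
      induction k with
      | zero => exact ⟨⟨x, hxC, rfl⟩, ⟨x, hxC, rfl⟩⟩
      | succ m ih =>
        obtain ⟨⟨z, hzC, hz⟩, ⟨w, hwC, hw⟩⟩ := ih
        obtain ⟨-, ⟨z', hz'C, hz'⟩⟩ := hsm z hzC
        obtain ⟨⟨w', hw'C, hw'⟩, -⟩ := hsm w hwC
        constructor
        · exact ⟨z', hz'C, z, ⟨hCsub hz'C, hCsub hzC, hz'⟩, hz⟩
        · refine ⟨w', hw'C, ?_⟩
          have := relPow_append hw
            (relPow_one.2 (⟨hCsub hwC, hCsub hw'C, hw'⟩ : rB w w'))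
          exact this
    exact ⟨hCsub hxC,
      (key n).1.imp (fun z hz => hz.2),
      (key n).2.imp (fun z hz => hz.2)⟩
end

section
/- Let 𝒞 be the class of finite structures in signature σ = {∼, P₁,...,Pₙ} ∪ {Rᵏ : R relation of a fixed finite structure 𝔄 on {1,...,n}} defined by: ∼ is an equivalence relation on the set of k-tuples with pairwise distinct entries, with classes P₁,...,Pₙ, and Rᵏ holds of (b¹,...,bʳ) iff all bⁱ are injective k-tuples and the tuple of their ∼-classes is in R. Then 𝒞 is closed under substructures and has the strong amalgamation property. -/
/-- The class `𝒞(𝔄,k)` is closed under substructures and has strong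
amalgamation. Structures in `𝒞(𝔄,k)` are uniquely determined by the partition
of the injective `k`-tuples into the classes `P₁, …, Pₙ`, so we encode a member
of the class on a finite domain `B` as a map `q : (Fin k → B) → Fin n` (only
its values on injective tuples matter), and embeddings as injections preserving
`q` on injective tuples. -/
theorem stmt18 (k n : ℕ) (hk : 2 ≤ k) (hn : 0 < n)
    {B C₁ C₂ : Type} [Finite B] [Finite C₁] [Finite C₂]
    (qB : (Fin k → B) → Fin n) (q₁ : (Fin k → C₁) → Fin n)
    (q₂ : (Fin k → C₂) → Fin n)
    (f₁ : B → C₁) (f₂ : B → C₂)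
    (hf₁ : Function.Injective f₁) (hf₂ : Function.Injective f₂)
    (hq₁ : ∀ t : Fin k → B, Function.Injective t → q₁ (f₁ ∘ t) = qB t)
    (hq₂ : ∀ t : Fin k → B, Function.Injective t → q₂ (f₂ ∘ t) = qB t) :
    -- closure under substructures:
    (∀ S : Set C₁, ∃ qS : (Fin k → S) → Fin n,
      ∀ t : Fin k → S, Function.Injective t → q₁ ((↑) ∘ t) = qS t) ∧
    -- strong amalgamation:
    ∃ (D : Type) (_ : Finite D) (qD : (Fin k → D) → Fin n)
      (e₁ : C₁ → D) (e₂ : C₂ → D),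
      Function.Injective e₁ ∧ Function.Injective e₂ ∧
      (∀ t : Fin k → C₁, Function.Injective t → qD (e₁ ∘ t) = q₁ t) ∧
      (∀ t : Fin k → C₂, Function.Injective t → qD (e₂ ∘ t) = q₂ t) ∧
      e₁ ∘ f₁ = e₂ ∘ f₂ ∧
      Set.range e₁ ∩ Set.range e₂ = Set.range (e₁ ∘ f₁) := by
  classical
  constructor
  · intro S
    exact ⟨fun t => q₁ ((↑) ∘ t), fun t _ => rfl⟩
  · set D := C₁ ⊕ {c : C₂ // c ∉ Set.range f₂} with hD
    let e₁ : C₁ → D := Sum.inl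
    let e₂ : C₂ → D := fun c =>
      if h : c ∈ Set.range f₂ then Sum.inl (f₁ h.choose) else Sum.inr ⟨c, h⟩
    have he₁ : Function.Injective e₁ := Sum.inl_injective
    have he₂f₂ : ∀ b : B, e₂ (f₂ b) = Sum.inl (f₁ b) := by
      intro b
      have h : f₂ b ∈ Set.range f₂ := ⟨b, rfl⟩
      have hb : h.choose = b := hf₂ h.choose_spec
      simp only [e₂, dif_pos h, hb]
    have hinl : ∀ c : C₂, (∃ a : C₁, e₂ c = Sum.inl a) → c ∈ Set.range f₂ := by
      intro c hc
      by_contra hcr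
      obtain ⟨a, ha⟩ := hc
      simp only [e₂, dif_neg hcr] at ha
      cases ha
    have he₂ : Function.Injective e₂ := by
      intro c c' h
      by_cases hc : c ∈ Set.range f₂ <;> by_cases hc' : c' ∈ Set.range f₂
      · obtain ⟨b, rfl⟩ := hc
        obtain ⟨b', rfl⟩ := hc'
        rw [he₂f₂, he₂f₂] at h
        exact congrArg f₂ (hf₁ (Sum.inl_injective h))
      · simp only [e₂, dif_pos hc, dif_neg hc'] at h
        exact absurd h (by simp)
      · simp only [e₂, dif_neg hc, dif_pos hc'] at h
        exact absurd h (by simp)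
      · simp only [e₂, dif_neg hc, dif_neg hc'] at h
        exact congrArg Subtype.val (Sum.inr_injective h)
    let qD : (Fin k → D) → Fin n := fun t =>
      if h : ∃ s : Fin k → C₁, e₁ ∘ s = t then q₁ h.choose
      else if h2 : ∃ s : Fin k → C₂, e₂ ∘ s = t then q₂ h2.choose
      else ⟨0, hn⟩
    have hcomm : e₁ ∘ f₁ = e₂ ∘ f₂ := by
      funext b
      exact (he₂f₂ b).symm
    refine ⟨D, inferInstance, qD, e₁, e₂, he₁, he₂, ?_, ?_, hcomm, ?_⟩
    · intro t ht
      have h : ∃ s : Fin k → C₁, e₁ ∘ s = e₁ ∘ t := ⟨t, rfl⟩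
      have hs : h.choose = t := by
        funext i
        exact he₁ (congrFun h.choose_spec i)
      simp only [qD, dif_pos h, hs]
    · intro t ht
      by_cases h : ∃ s : Fin k → C₁, e₁ ∘ s = e₂ ∘ t
      · -- t lands in the range of f₂
        obtain ⟨s, hs⟩ := h
        have hti : ∀ i, t i ∈ Set.range f₂ := by
          intro i
          exact hinl (t i) ⟨s i, (congrFun hs i).symm⟩
        choose u hu using hti
        have htu : t = f₂ ∘ u := by funext i; exact (hu i).symm
        have hui : Function.Injective u := by
          intro i j hij
          exact ht (by rw [htu]; simp [Function.comp, hij])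
        have hse : e₂ ∘ t = e₁ ∘ (f₁ ∘ u) := by
          funext i
          rw [htu]
          exact he₂f₂ (u i)
        have h' : ∃ s : Fin k → C₁, e₁ ∘ s = e₂ ∘ t := ⟨f₁ ∘ u, hse.symm⟩
        have hch : h'.choose = f₁ ∘ u := by
          funext i
          exact he₁ (congrFun (h'.choose_spec.trans hse) i)
        simp only [qD, dif_pos h', hch]
        rw [hq₁ u hui, htu, hq₂ u hui]
      · have h2 : ∃ s : Fin k → C₂, e₂ ∘ s = e₂ ∘ t := ⟨t, rfl⟩
        have hs : h2.choose = t := by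
          funext i
          exact he₂ (congrFun h2.choose_spec i)
        simp only [qD, dif_neg h, dif_pos h2, hs]
    · apply Set.Subset.antisymm
      · rintro d ⟨⟨c₁, rfl⟩, ⟨c₂, hc₂⟩⟩
        obtain ⟨b, rfl⟩ := hinl c₂ ⟨c₁, hc₂⟩
        rw [he₂f₂] at hc₂
        exact ⟨b, hc₂⟩
      · rintro d ⟨b, rfl⟩
        exact ⟨⟨f₁ b, rfl⟩, ⟨f₂ b, he₂f₂ b⟩⟩
end
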